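/- arXiv:2304.09815 — 2 statements merged into one kernel-verified Lean document; each statement's English description precedes it below -/
import Mathlib

section
/- Fix 0 < a < 1 and let α > 1. Define x(α) = (1/2)·((α^{1+a} − α^{2a})/(α^{1+a} − 1))^{(1−a)/(2a)} · ((1 − α^{2a})/(α^{1+a} − 1)). Then L_a ≤ x(α) < 0, ψ₋₁(a, x(α)) = (1/(2a))·log((α^{1−a} − 1)/(α^{1+a} − 1)), and ψ₀(a, x(α)) = log α + ψ₋₁(a, x(α)). Equivalently, the two numbers w₋ = (1/(2a))·log((α^{1−a}−1)/(α^{1+a}−1)) and w₀ = log α + w₋ satisfy w₋ ≤ M_a ≤ w₀ and f(a,w₀) = f(a,w₋) = x(α). -/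
noncomputable def fab (a w : ℝ) : ℝ := Real.sinh (a * w) * Real.exp w
noncomputable def Ma (a : ℝ) : ℝ := (1 / (2 * a)) * Real.log ((1 - a) / (1 + a))
noncomputable def La (a : ℝ) : ℝ :=
  -(a / Real.sqrt (1 - a ^ 2)) * ((1 - a) / (1 + a)) ^ (1 / (2 * a))

lemma fab_eq (a w : ℝ) : fab a w = (Real.exp ((1+a)*w) - Real.exp ((1-a)*w))/2 := by
  unfold fab
  rw [Real.sinh_eq, div_mul_eq_mul_div, sub_mul, ← Real.exp_add, ← Real.exp_add]
  ring_nf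

lemma fab_hasDeriv (a w : ℝ) : HasDerivAt (fab a)
    (((1+a)*Real.exp ((1+a)*w) - (1-a)*Real.exp ((1-a)*w))/2) w := by
  have h1 : HasDerivAt (fun w : ℝ => Real.exp ((1+a)*w)) (Real.exp ((1+a)*w) * (1+a)) w :=
    (Real.hasDerivAt_exp _).comp w (by simpa using (hasDerivAt_id w).const_mul (1+a))
  have h2 : HasDerivAt (fun w : ℝ => Real.exp ((1-a)*w)) (Real.exp ((1-a)*w) * (1-a)) w :=
    (Real.hasDerivAt_exp _).comp w (by simpa using (hasDerivAt_id w).const_mul (1-a))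
  have := (h1.sub h2).div_const 2
  have hfe : fab a = fun w => (Real.exp ((1+a)*w) - Real.exp ((1-a)*w))/2 := funext (fab_eq a)
  rw [hfe]
  exact this.congr_deriv (by ring)

lemma exp_two_a_Ma (a : ℝ) (ha0 : 0 < a) (ha1 : a < 1) :
    Real.exp (2*a*Ma a) = (1-a)/(1+a) := by
  have h : 2*a*Ma a = Real.log ((1-a)/(1+a)) := by
    unfold Ma; field_simp
  rw [h, Real.exp_log (div_pos (by linarith) (by linarith))]

lemma deriv_pos (a w : ℝ) (ha0 : 0 < a) (ha1 : a < 1) (hw : Ma a < w) :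
    0 < ((1+a)*Real.exp ((1+a)*w) - (1-a)*Real.exp ((1-a)*w))/2 := by
  have key : (1-a) < (1+a) * Real.exp (2*a*w) := by
    have h1 : Real.exp (2*a*Ma a) < Real.exp (2*a*w) :=
      Real.exp_lt_exp.2 (by nlinarith)
    rw [exp_two_a_Ma a ha0 ha1] at h1
    have : (1-a)/(1+a) * (1+a) < Real.exp (2*a*w) * (1+a) := by nlinarith
    rw [div_mul_cancel₀ _ (by linarith : (1:ℝ)+a ≠ 0)] at this
    nlinarith
  have he : Real.exp ((1+a)*w) = Real.exp ((1-a)*w) * Real.exp (2*a*w) := by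
    rw [← Real.exp_add]; ring_nf
  have hp := Real.exp_pos ((1-a)*w)
  rw [he]; nlinarith

lemma fab_mono (a : ℝ) (ha0 : 0 < a) (ha1 : a < 1) : StrictMonoOn (fab a) (Set.Ici (Ma a)) := by
  apply strictMonoOn_of_deriv_pos (convex_Ici _)
  · exact fun w _ => (fab_hasDeriv a w).differentiableAt.continuousAt.continuousWithinAt
  · intro w hw
    rw [interior_Ici] at hw
    rw [(fab_hasDeriv a w).deriv]
    exact deriv_pos a w ha0 ha1 hw

lemma fab_anti (a : ℝ) (ha0 : 0 < a) (ha1 : a < 1) : StrictAntiOn (fab a) (Set.Iic (Ma a)) := by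
  apply strictAntiOn_of_deriv_neg (convex_Iic _)
  · exact fun w _ => (fab_hasDeriv a w).differentiableAt.continuousAt.continuousWithinAt
  · intro w hw
    rw [interior_Iic] at hw
    rw [(fab_hasDeriv a w).deriv]
    have key : (1+a) * Real.exp (2*a*w) < (1-a) := by
      have h1 : Real.exp (2*a*w) < Real.exp (2*a*Ma a) :=
        Real.exp_lt_exp.2 (by nlinarith [mul_pos ha0 (sub_pos.2 (Set.mem_Iio.1 hw))])
      rw [exp_two_a_Ma a ha0 ha1] at h1
      have : Real.exp (2*a*w) * (1+a) < (1-a)/(1+a) * (1+a) := by nlinarith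
      rw [div_mul_cancel₀ _ (by linarith : (1:ℝ)+a ≠ 0)] at this
      nlinarith
    have he : Real.exp ((1+a)*w) = Real.exp ((1-a)*w) * Real.exp (2*a*w) := by
      rw [← Real.exp_add]; ring_nf
    have hp := Real.exp_pos ((1-a)*w)
    rw [he]; nlinarith

lemma La_eq_fab_Ma (a : ℝ) (ha0 : 0 < a) (ha1 : a < 1) : La a = fab a (Ma a) := by
  set s : ℝ := (1-a)/(1+a) with hs
  have hs0 : 0 < s := div_pos (by linarith) (by linarith)
  have hlogs : Real.log s = 2*a*Ma a := by unfold Ma; field_simp; rw [hs]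
  have hq : Real.exp ((1-a)*Ma a) = s ^ ((1-a)/(2*a)) := by
    rw [Real.rpow_def_of_pos hs0, hlogs]
    congr 1; field_simp
  have hfab : fab a (Ma a) = s ^ ((1-a)/(2*a)) * (s - 1) / 2 := by
    rw [fab_eq, show (1+a)*Ma a = (1-a)*Ma a + 2*a*Ma a by ring, Real.exp_add, hq,
      exp_two_a_Ma a ha0 ha1, ← hs]
    ring
  have hsplit : s ^ (1/(2*a)) = s ^ ((1-a)/(2*a)) * s ^ ((1:ℝ)/2) := by
    rw [← Real.rpow_add hs0]
    congr 1; field_simp; ring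
  have hsqrt : s ^ ((1:ℝ)/2) = Real.sqrt (1-a^2) / (1+a) := by
    rw [← Real.sqrt_eq_rpow, hs, show (1-a)/(1+a) = (1-a^2)/(1+a)^2 by field_simp; ring,
      Real.sqrt_div (by nlinarith), Real.sqrt_sq (by linarith)]
  have hsq : (0:ℝ) < Real.sqrt (1-a^2) := Real.sqrt_pos.2 (by nlinarith)
  rw [hfab]
  unfold La
  rw [← hs, hsplit, hsqrt]
  have h1 : s - 1 = -(2*a)/(1+a) := by rw [hs]; field_simp; ring
  rw [h1]
  field_simp
set_option maxHeartbeats 1000000 in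
/-- Simultaneous parametrization of both branches of `ψ(a,·)` for `α > 1`. -/
theorem stmt_5 (a α : ℝ) (ha0 : 0 < a) (ha1 : a < 1) (hα : 1 < α)
    (psi0 psi1 : ℝ → ℝ)
    (hpsi0 : ∀ x, La a ≤ x → Ma a ≤ psi0 x ∧ fab a (psi0 x) = x)
    (hpsi1 : ∀ x, La a ≤ x → x < 0 → psi1 x ≤ Ma a ∧ fab a (psi1 x) = x) :
    let x : ℝ := (1 / 2) * ((α ^ (1 + a) - α ^ (2 * a)) / (α ^ (1 + a) - 1)) ^ ((1 - a) / (2 * a))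
      * ((1 - α ^ (2 * a)) / (α ^ (1 + a) - 1))
    let wm : ℝ := (1 / (2 * a)) * Real.log ((α ^ (1 - a) - 1) / (α ^ (1 + a) - 1))
    let w0 : ℝ := Real.log α + wm
    La a ≤ x ∧ x < 0 ∧
    psi1 x = wm ∧ psi0 x = w0 ∧
    wm ≤ Ma a ∧ Ma a ≤ w0 ∧ fab a w0 = x ∧ fab a wm = x := by
  intro x wm w0
  have hα0 : (0:ℝ) < α := lt_trans one_pos hα
  have ha : a ≠ 0 := ne_of_gt ha0
  set A : ℝ := α ^ (1 + a) with hAdef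
  set B : ℝ := α ^ (2 * a) with hBdef
  set C : ℝ := α ^ (1 - a) with hCdef
  have hA1 : 1 < A := Real.one_lt_rpow_iff_of_pos hα0 |>.2 (Or.inl ⟨hα, by linarith⟩)
  have hB1 : 1 < B := Real.one_lt_rpow_iff_of_pos hα0 |>.2 (Or.inl ⟨hα, by linarith⟩)
  have hC1 : 1 < C := Real.one_lt_rpow_iff_of_pos hα0 |>.2 (Or.inl ⟨hα, by linarith⟩)
  have hBC : B * C = A := by
    rw [hBdef, hCdef, hAdef, ← Real.rpow_add hα0]; ring_nf
  have hCA : C < A := by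
    rw [hCdef, hAdef]; exact (Real.rpow_lt_rpow_left_iff hα).2 (by linarith)
  set r : ℝ := (C - 1) / (A - 1) with hrdef
  have hr0 : 0 < r := div_pos (by linarith) (by linarith)
  have hr1 : r < 1 := (div_lt_one (by linarith)).2 (by linarith)
  set q : ℝ := (1 - a) / (2 * a) with hqdef
  have hxdef : x = (1 / 2) * ((A - B) / (A - 1)) ^ q * ((1 - B) / (A - 1)) := rfl
  have hwmdef : wm = (1 / (2 * a)) * Real.log r := rfl
  have hw0def : w0 = Real.log α + wm := rfl
  clear_value x wm w0 A B C r q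
  have hlogr : Real.log r = 2 * a * wm := by
    rw [hwmdef]; field_simp
  have hexpwm : Real.exp (2 * a * wm) = r := by rw [← hlogr, Real.exp_log hr0]
  have hqwm : Real.exp ((1 - a) * wm) = r ^ q := by
    rw [Real.rpow_def_of_pos hr0, hlogr]; congr 1; rw [hqdef]; field_simp
  have hrq0 : 0 < r ^ q := Real.rpow_pos_of_pos hr0 q
  -- fab a wm
  have hfwm : fab a wm = r ^ q * (r - 1) / 2 := by
    rw [fab_eq, show (1+a)*wm = (1-a)*wm + 2*a*wm by ring, Real.exp_add, hqwm, hexpwm]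
    ring
  -- x in terms of r
  have hABr : (A - B) / (A - 1) = B * r := by
    rw [hrdef, mul_div_assoc']
    congr 1
    linear_combination -hBC
  have hBq : B ^ q = C := by
    rw [hBdef, ← Real.rpow_mul hα0.le, hCdef]
    congr 1; rw [hqdef]; field_simp
  have hxr : x = C * r ^ q * ((1 - B) / (A - 1)) / 2 := by
    rw [hxdef, hABr, Real.mul_rpow (by linarith) hr0.le, hBq]; ring
  have hfwmx : fab a wm = x := by
    rw [hfwm, hxr]
    have h1 : r - 1 = C * (1 - B) / (A - 1) := by
      rw [hrdef, div_sub_one (by linarith : A - 1 ≠ 0)]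
      congr 1
      linear_combination hBC
    rw [h1]; ring
  -- fab a w0
  have hexpB : Real.exp (2 * a * Real.log α) = B := by
    rw [hBdef, Real.rpow_def_of_pos hα0]; ring_nf
  have hexpC : Real.exp ((1 - a) * Real.log α) = C := by
    rw [hCdef, Real.rpow_def_of_pos hα0]; ring_nf
  have hexpw0 : Real.exp (2 * a * w0) = B * r := by
    rw [hw0def, show 2*a*(Real.log α + wm) = 2*a*Real.log α + 2*a*wm by ring,
      Real.exp_add, hexpB, hexpwm]
  have hfw0x : fab a w0 = x := by
    rw [fab_eq, show (1+a)*w0 = (1-a)*w0 + 2*a*w0 by ring, Real.exp_add,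
      show (1-a)*w0 = (1-a)*Real.log α + (1-a)*wm by rw [hw0def]; ring,
      Real.exp_add, hexpC, hqwm, hexpw0, hxr]
    have h1 : B * r - 1 = (1 - B) / (A - 1) := by
      rw [hrdef, mul_div_assoc', div_sub_one (by linarith : A - 1 ≠ 0)]
      congr 1
      linear_combination hBC
    calc (C * r ^ q * (B * r) - C * r ^ q) / 2 = C * r ^ q * (B * r - 1) / 2 := by ring
      _ = C * r ^ q * ((1 - B) / (A - 1)) / 2 := by rw [h1]
  -- AM-GM inequalities
  have hgm1 : (1 + a) * C ≤ (1 - a) * A + 2 * a := by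
    have key := Real.geom_mean_le_arith_mean2_weighted
      (show (0:ℝ) ≤ (1-a)/(1+a) from div_nonneg (by linarith) (by linarith))
      (show (0:ℝ) ≤ (2*a)/(1+a) from div_nonneg (by linarith) (by linarith))
      (show (0:ℝ) ≤ A by linarith) (show (0:ℝ) ≤ 1 by norm_num)
      (show (1-a)/(1+a) + (2*a)/(1+a) = 1 by field_simp; ring)
    rw [Real.one_rpow, mul_one, mul_one] at key
    have hAp : A ^ ((1-a)/(1+a)) = C := by
      rw [hAdef, ← Real.rpow_mul hα0.le, hCdef]; congr 1; field_simp
    rw [hAp] at key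
    have h := mul_le_mul_of_nonneg_left key (show (0:ℝ) ≤ 1+a by linarith)
    calc (1+a) * C ≤ (1+a) * ((1-a)/(1+a) * A + (2*a)/(1+a)) := h
      _ = (1-a) * A + 2*a := by field_simp
  have hgm2 : (1 + a) * B ≤ 2 * a * A + (1 - a) := by
    have key := Real.geom_mean_le_arith_mean2_weighted
      (show (0:ℝ) ≤ (2*a)/(1+a) from div_nonneg (by linarith) (by linarith))
      (show (0:ℝ) ≤ (1-a)/(1+a) from div_nonneg (by linarith) (by linarith))
      (show (0:ℝ) ≤ A by linarith) (show (0:ℝ) ≤ 1 by norm_num)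
      (show (2*a)/(1+a) + (1-a)/(1+a) = 1 by field_simp; ring)
    rw [Real.one_rpow, mul_one, mul_one] at key
    have hAp : A ^ ((2*a)/(1+a)) = B := by
      rw [hAdef, ← Real.rpow_mul hα0.le, hBdef]; congr 1; field_simp
    rw [hAp] at key
    have h := mul_le_mul_of_nonneg_left key (show (0:ℝ) ≤ 1+a by linarith)
    calc (1+a) * B ≤ (1+a) * ((2*a)/(1+a) * A + (1-a)/(1+a)) := h
      _ = 2*a * A + (1-a) := by field_simp
  -- wm ≤ Ma
  have hwmMa : wm ≤ Ma a := by
    have hrle : r ≤ (1-a)/(1+a) := by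
      rw [hrdef, div_le_div_iff₀ (by linarith) (by linarith)]
      nlinarith [hgm1]
    have := Real.log_le_log hr0 hrle
    rw [hwmdef]
    unfold Ma
    have h2a : (0:ℝ) ≤ 1/(2*a) := by positivity
    exact mul_le_mul_of_nonneg_left this h2a
  -- Ma ≤ w0
  have hMaw0 : Ma a ≤ w0 := by
    have hBr : (1-a)/(1+a) ≤ B * r := by
      rw [hrdef, mul_div_assoc', div_le_div_iff₀ (by linarith) (by linarith)]
      nlinarith [hBC, hgm2]
    have hle : Real.exp (2*a*Ma a) ≤ Real.exp (2*a*w0) := by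
      rw [exp_two_a_Ma a ha0 ha1, hexpw0]; exact hBr
    have := Real.exp_le_exp.1 hle
    nlinarith
  -- La ≤ x and x < 0
  have hxLa : La a ≤ x := by
    rw [La_eq_fab_Ma a ha0 ha1, ← hfwmx]
    exact (fab_anti a ha0 ha1).antitoneOn (Set.mem_Iic.2 hwmMa) (Set.mem_Iic.2 le_rfl) hwmMa
  have hxneg : x < 0 := by
    rw [← hfwmx, hfwm]
    have : r ^ q * (r - 1) < 0 := mul_neg_of_pos_of_neg hrq0 (by linarith)
    linarith
  obtain ⟨h0a, h0b⟩ := hpsi0 x hxLa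
  obtain ⟨h1a, h1b⟩ := hpsi1 x hxLa hxneg
  have hpsi1eq : psi1 x = wm :=
    (fab_anti a ha0 ha1).injOn (Set.mem_Iic.2 h1a) (Set.mem_Iic.2 hwmMa)
      (by rw [h1b, hfwmx])
  have hpsi0eq : psi0 x = w0 :=
    (fab_mono a ha0 ha1).injOn (Set.mem_Ici.2 h0a) (Set.mem_Ici.2 hMaw0)
      (by rw [h0b, hfw0x])
  exact ⟨hxLa, hxneg, hpsi1eq, hpsi0eq, hwmMa, hMaw0, hfw0x, hfwmx⟩
end

section
/- Fix 0 < a < 1 with a ≠ 1/3, and let x ≥ (1/2)·(1 + 1/(e^{|1/3 − a|} − 1))^{(1+a)/(2a)}. Then: (1) if 0 < a < 1/3, (1/(1+a))·(2x)^{−2a/(1+a)} + log(2x)/(1+a) ≤ ψ₀(a,x) ≤ log(2x)/(1+a) + (2/(1+a))·(2x)^{−2a/(1+a)}; (2) if 1/3 < a < 1, (1/(3(1+a)))·(2x)^{−2a/(1+a)} + log(2x)/(1+a) ≤ ψ₀(a,x) ≤ log(2x)/(1+a) + (1/(1+a))·(2x)^{−2a/(1+a)}. -/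
lemma ineq_low1 (a y : ℝ) (ha0 : 0 < a) (hlt : a < 1/3) (hy0 : 0 < y) (hy1 : y < 1)
    (hyδ : y ≤ 1/3 - a) :
    Real.exp y - 1 ≤ y * Real.exp ((1-a)*(y/(1+a))) := by
  have h1a : (0:ℝ) < 1 + a := by linarith
  set u := (1-a)*(y/(1+a)) with hudef
  have hu : u * (1+a) = (1-a)*y := by rw [hudef]; field_simp
  clear_value u
  have hE1 : Real.exp y ≤ 1 + y + y^2/2 + 2/9*y^3 := by
    have h := Real.exp_bound' hy0.le hy1.le (n := 3) (by norm_num)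
    simp [Finset.sum_range_succ, Nat.factorial] at h
    nlinarith [h]
  have hE2 : 1 + u ≤ Real.exp u := by linarith [Real.add_one_le_exp u]
  have hu0 : 0 ≤ u := by nlinarith
  nlinarith [mul_le_mul_of_nonneg_left hE2 hy0.le, sq_nonneg y,
    mul_le_mul_of_nonneg_right hyδ (mul_pos hy0 hy0).le, hu]

lemma ineq_up1 (a y : ℝ) (ha0 : 0 < a) (hlt : a < 1/3) (hy0 : 0 < y)
    (hyδ : y ≤ 1/3 - a) :
    y * Real.exp ((1-a)*(2*y/(1+a))) ≤ Real.exp (2*y) - 1 := by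
  have h1a : (0:ℝ) < 1 + a := by linarith
  set u := (1-a)*(2*y/(1+a)) with hudef
  have hu : u * (1+a) = 2*(1-a)*y := by rw [hudef]; field_simp
  clear_value u
  have hlog2 : (1:ℝ)/3 < Real.log 2 := by
    have := Real.log_two_gt_d9; linarith
  have hu2 : u ≤ y + Real.log 2 := by nlinarith
  have hEu : Real.exp u ≤ 2 * Real.exp y := by
    calc Real.exp u ≤ Real.exp (y + Real.log 2) := Real.exp_le_exp.mpr hu2
    _ = 2 * Real.exp y := by rw [Real.exp_add, Real.exp_log two_pos]; ring
  have hsinh : y ≤ Real.sinh y := Real.self_le_sinh_iff.mpr hy0.le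
  have hid : Real.exp (2*y) - 1 = 2 * Real.exp y * Real.sinh y := by
    rw [Real.sinh_eq, Real.exp_neg]
    have h2 : Real.exp (2*y) = Real.exp y * Real.exp y := by
      rw [← Real.exp_add]; ring_nf
    have h3 : Real.exp y ≠ 0 := (Real.exp_pos y).ne'
    rw [h2]
    field_simp
  rw [hid]
  nlinarith [Real.exp_pos y, mul_le_mul_of_nonneg_left hEu hy0.le]

lemma ineq_low2 (a y : ℝ) (hlt : 1/3 < a) (ha1 : a < 1) (hy0 : 0 < y) (hy1 : y < 1) :
    Real.exp (y/3) - 1 ≤ y * Real.exp ((1-a)*(y/(3*(1+a)))) := by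
  have h1a : (0:ℝ) < 1 + a := by linarith
  have hu0 : 0 ≤ (1-a)*(y/(3*(1+a))) := by
    apply mul_nonneg (by linarith)
    positivity
  have hEu : 1 ≤ Real.exp ((1-a)*(y/(3*(1+a)))) := Real.one_le_exp hu0
  have hE1 : Real.exp (y/3) ≤ 1 + y/3 + 3/4*(y/3)^2 := by
    have h := Real.exp_bound' (by positivity : (0:ℝ) ≤ y/3)
      (by linarith : y/3 ≤ 1) (n := 2) (by norm_num)
    simp [Finset.sum_range_succ, Nat.factorial] at h
    nlinarith [h]
  nlinarith [mul_le_mul_of_nonneg_left hEu hy0.le]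

lemma ineq_up2 (a y : ℝ) (hlt : 1/3 < a) (ha1 : a < 1) (hy0 : 0 < y) :
    y * Real.exp ((1-a)*(y/(1+a))) ≤ Real.exp y - 1 := by
  have h1a : (0:ℝ) < 1 + a := by linarith
  set u := (1-a)*(y/(1+a)) with hudef
  have hu : u * (1+a) = (1-a)*y := by rw [hudef]; field_simp
  clear_value u
  have huy : u ≤ y/2 := by nlinarith
  have hEu : Real.exp u ≤ Real.exp (y/2) := Real.exp_le_exp.mpr huy
  have hsinh : y/2 ≤ Real.sinh (y/2) := Real.self_le_sinh_iff.mpr (by positivity)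
  have hid : Real.exp y - 1 = 2 * Real.exp (y/2) * Real.sinh (y/2) := by
    rw [Real.sinh_eq, Real.exp_neg]
    have h2 : Real.exp y = Real.exp (y/2) * Real.exp (y/2) := by
      rw [← Real.exp_add]; ring_nf
    have h3 : Real.exp (y/2) ≠ 0 := (Real.exp_pos (y/2)).ne'
    rw [h2]
    field_simp
  rw [hid]
  nlinarith [Real.exp_pos (y/2), mul_le_mul_of_nonneg_left hEu hy0.le]

lemma fab_strictMono {a : ℝ} (ha0 : 0 < a) (ha1 : a < 1) :
    StrictMonoOn (fab a) (Set.Ici (Ma a)) := by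
  have h1a : (0:ℝ) < 1 + a := by linarith
  apply strictMonoOn_of_deriv_pos (convex_Ici _)
  · exact ((Real.continuous_sinh.comp (continuous_const.mul continuous_id)).mul
      Real.continuous_exp).continuousOn
  · intro w hw
    rw [interior_Ici, Set.mem_Ioi] at hw
    have hd : HasDerivAt (fab a)
        (Real.cosh (a*w) * a * Real.exp w + Real.sinh (a*w) * Real.exp w) w := by
      have h1 : HasDerivAt (fun w => Real.sinh (a*w)) (Real.cosh (a*w) * a) w := by
        have := (Real.hasDerivAt_sinh (a*w)).comp w ((hasDerivAt_id w).const_mul a)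
        simpa [Function.comp_def] using this
      exact h1.mul (Real.hasDerivAt_exp w)
    rw [hd.deriv]
    have hr0 : (0:ℝ) < (1-a)/(1+a) := div_pos (by linarith) (by linarith)
    have hMa : 2*a*(Ma a) = Real.log ((1-a)/(1+a)) := by
      unfold Ma; field_simp
    have hlt : Real.log ((1-a)/(1+a)) < 2*(a*w) := by
      have : 2*a*(Ma a) < 2*a*w := by nlinarith
      linarith [hMa ▸ this]
    have hexp : (1-a)/(1+a) < Real.exp (2*(a*w)) := by
      calc (1-a)/(1+a) = Real.exp (Real.log ((1-a)/(1+a))) := (Real.exp_log hr0).symm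
      _ < Real.exp (2*(a*w)) := Real.exp_lt_exp.mpr hlt
    have hE : Real.exp (2*(a*w)) = Real.exp (a*w) * Real.exp (a*w) := by
      rw [← Real.exp_add]; ring_nf
    have hEpos := Real.exp_pos (a*w)
    have hEneg := Real.exp_pos (-(a*w))
    have hprod : Real.exp (a*w) * Real.exp (-(a*w)) = 1 := by
      rw [← Real.exp_add]; simp
    have hkey : 0 < Real.cosh (a*w) * a + Real.sinh (a*w) := by
      rw [Real.cosh_eq, Real.sinh_eq]
      rw [hE] at hexp
      have h1 : (1-a) < (1+a) * (Real.exp (a*w) * Real.exp (a*w)) := by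
        rw [div_lt_iff₀ h1a] at hexp; linarith [hexp]
      nlinarith [mul_pos hEneg h1a, hprod, hEpos, hEneg]
    nlinarith [Real.exp_pos w, hkey]

/-- Two-sided asymptotic bounds for `ψ₀(a,x)` when
`x ≥ (1/2)(1 + 1/(e^{|1/3−a|} − 1))^{(1+a)/(2a)}`. -/
theorem stmt_15 (a x : ℝ) (ha0 : 0 < a) (ha1 : a < 1) (hne : a ≠ 1/3)
    (psi0 : ℝ → ℝ)
    (hpsi0 : ∀ t, La a ≤ t → Ma a ≤ psi0 t ∧ fab a (psi0 t) = t)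
    (hx : (1/2) * (1 + 1 / (Real.exp |1/3 - a| - 1)) ^ ((1 + a) / (2 * a)) ≤ x) :
    (a < 1/3 →
      (1/(1+a)) * (2*x) ^ (-(2*a)/(1+a)) + Real.log (2*x) / (1+a) ≤ psi0 x ∧
      psi0 x ≤ Real.log (2*x) / (1+a) + (2/(1+a)) * (2*x) ^ (-(2*a)/(1+a))) ∧
    (1/3 < a →
      (1/(3*(1+a))) * (2*x) ^ (-(2*a)/(1+a)) + Real.log (2*x) / (1+a) ≤ psi0 x ∧
      psi0 x ≤ Real.log (2*x) / (1+a) + (1/(1+a)) * (2*x) ^ (-(2*a)/(1+a))) := by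
  have h1a : (0:ℝ) < 1 + a := by linarith
  set δ := |1/3 - a| with hδdef
  have hδ0 : 0 < δ := abs_pos.mpr (fun h => hne (by linarith [sub_eq_zero.mp h]))
  have hδ1 : δ ≤ 2/3 := by
    rw [hδdef, abs_le]; constructor <;> [linarith; linarith]
  have hEδ : 1 < Real.exp δ := by
    rw [← Real.exp_zero]; exact Real.exp_lt_exp.mpr hδ0
  set B := 1 + 1 / (Real.exp δ - 1) with hBdef
  have hB1 : (1:ℝ) < B := by
    have h0 : 0 < 1 / (Real.exp δ - 1) := div_pos one_pos (by linarith)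
    rw [hBdef]; linarith
  have hp : 0 < (1 + a) / (2 * a) := by positivity
  have hBp1 : 1 < B ^ ((1 + a) / (2 * a)) :=
    Real.one_lt_rpow_iff_of_pos (by linarith) |>.mpr (Or.inl ⟨hB1, hp⟩)
  have hxB : B ^ ((1 + a) / (2 * a)) ≤ 2 * x := by linarith
  have h2x1 : 1 < 2 * x := lt_of_lt_of_le hBp1 hxB
  have h2x0 : (0:ℝ) < 2 * x := by linarith
  have hlog0 : 0 ≤ Real.log (2*x) := Real.log_nonneg h2x1.le
  set s := Real.log (2*x) / (1+a) with hsdef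
  set y := (2*x) ^ (-(2*a)/(1+a) : ℝ) with hydef
  have hyp0 : 0 < y := Real.rpow_pos_of_pos h2x0 _
  have hy1 : y < 1 := Real.rpow_lt_one_of_one_lt_of_neg h2x1 (by
    rw [neg_div]; exact neg_neg_of_pos (by positivity))
  -- y ≤ δ
  have hyδ : y ≤ δ := by
    have h1 : B ≤ (2*x) ^ (2*a/(1+a) : ℝ) := by
      calc B = (B ^ ((1+a)/(2*a) : ℝ)) ^ (2*a/(1+a) : ℝ) := by
            rw [← Real.rpow_mul (by linarith)]
            rw [show (1+a)/(2*a) * (2*a/(1+a)) = 1 by field_simp]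
            exact (Real.rpow_one B).symm
        _ ≤ (2*x) ^ (2*a/(1+a) : ℝ) :=
            Real.rpow_le_rpow (by positivity) hxB (by positivity)
    have h2 : y = ((2*x) ^ (2*a/(1+a) : ℝ))⁻¹ := by
      rw [hydef, neg_div, Real.rpow_neg h2x0.le]
    have h3 : y ≤ B⁻¹ := by
      rw [h2]
      exact inv_anti₀ (by linarith) h1
    have h4 : B⁻¹ = 1 - Real.exp (-δ) := by
      have hE0 : (0:ℝ) < Real.exp δ := Real.exp_pos δ
      have hBE : B = Real.exp δ / (Real.exp δ - 1) := by
        have hne1 : Real.exp δ - 1 ≠ 0 := by linarith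
        rw [hBdef]; field_simp; ring
      rw [hBE, inv_div, Real.exp_neg]
      field_simp
    have h5 : 1 - Real.exp (-δ) ≤ δ := by
      have := Real.add_one_le_exp (-δ)
      linarith
    linarith [h3, h4 ▸ h3]
  -- exponential identities at s
  have hexp1 : Real.exp ((1+a)*s) = 2*x := by
    rw [hsdef, show (1+a) * (Real.log (2*x)/(1+a)) = Real.log (2*x) by field_simp]
    exact Real.exp_log h2x0
  have hexp2 : Real.exp ((1-a)*s) = 2*x*y := by
    have : (1-a)*s = Real.log (2*x) * ((1-a)/(1+a)) := by rw [hsdef]; ring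
    rw [this, ← Real.rpow_def_of_pos h2x0]
    rw [show (1-a)/(1+a) = 1 + (-(2*a)/(1+a)) by field_simp; ring]
    rw [Real.rpow_add h2x0, Real.rpow_one, hydef]
  clear_value δ B s y
  have key : ∀ t : ℝ, fab a (s + t) =
      x * Real.exp ((1+a)*t) - x*y*Real.exp ((1-a)*t) := by
    intro t
    rw [fab_eq, show (1+a)*(s+t) = (1+a)*s + (1+a)*t by ring,
      show (1-a)*(s+t) = (1-a)*s + (1-a)*t by ring,
      Real.exp_add, Real.exp_add, hexp1, hexp2]
    ring
  -- psi0 facts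
  have hLa : La a ≤ x := by
    have h1 : 0 ≤ a / Real.sqrt (1 - a^2) := by positivity
    have h2 : (0:ℝ) ≤ ((1 - a) / (1 + a)) ^ (1 / (2 * a) : ℝ) :=
      Real.rpow_nonneg (div_nonneg (by linarith) (by linarith)) _
    have : La a ≤ 0 := by
      unfold La
      exact mul_nonpos_of_nonpos_of_nonneg (by linarith) h2
    linarith
  obtain ⟨hM, hfx⟩ := hpsi0 x hLa
  have hMa0 : Ma a < 0 := by
    unfold Ma
    have : Real.log ((1-a)/(1+a)) < 0 :=
      Real.log_neg (div_pos (by linarith) (by linarith)) (by rw [div_lt_one h1a]; linarith)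
    have h2a : (0:ℝ) < 1/(2*a) := by positivity
    nlinarith
  have hmono := fab_strictMono ha0 ha1
  -- upper bound principle
  have hub : ∀ t : ℝ, 0 < t →
      y * Real.exp ((1-a)*t) ≤ Real.exp ((1+a)*t) - 1 → psi0 x ≤ s + t := by
    intro t ht hineq
    by_contra h
    push_neg at h
    have hst : Ma a ≤ s + t := by
      have hs0 : 0 ≤ s := by rw [hsdef]; exact div_nonneg hlog0 h1a.le
      linarith
    have := hmono hst (Set.mem_Ici.mpr hM) h
    rw [hfx, key t] at this
    have hx0 : (0:ℝ) < x := by linarith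
    linarith [this, mul_le_mul_of_nonneg_left hineq hx0.le]
  -- lower bound principle
  have hlb : ∀ t : ℝ, 0 < t →
      Real.exp ((1+a)*t) - 1 ≤ y * Real.exp ((1-a)*t) → s + t ≤ psi0 x := by
    intro t ht hineq
    by_contra h
    push_neg at h
    have hst : Ma a ≤ s + t := by
      have hs0 : 0 ≤ s := by rw [hsdef]; exact div_nonneg hlog0 h1a.le
      linarith
    have := hmono (Set.mem_Ici.mpr hM) hst h
    rw [hfx, key t] at this
    have hx0 : (0:ℝ) < x := by linarith
    linarith [this, mul_le_mul_of_nonneg_left hineq hx0.le]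
  constructor
  · -- case a < 1/3
    intro hlt
    have hδeq : δ = 1/3 - a := by rw [hδdef]; exact abs_of_pos (by linarith)
    constructor
    · -- lower bound, t = y/(1+a)
      have ht : 0 < y/(1+a) := by positivity
      have h := hlb (y/(1+a)) ht ?_
      · have heq : (1/(1+a)) * y + s = s + y/(1+a) := by ring
        rw [heq]; exact h
      · rw [show (1+a)*(y/(1+a)) = y by field_simp]
        exact ineq_low1 a y ha0 hlt hyp0 hy1 (by rw [hδeq] at hyδ; exact hyδ)
    · -- upper bound, t = 2*y/(1+a)
      have ht : 0 < 2*y/(1+a) := by positivity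
      have h := hub (2*y/(1+a)) ht ?_
      · have heq : s + (2/(1+a)) * y = s + 2*y/(1+a) := by ring
        rw [heq]; exact h
      · rw [show (1+a)*(2*y/(1+a)) = 2*y by field_simp]
        exact ineq_up1 a y ha0 hlt hyp0 (by rw [hδeq] at hyδ; exact hyδ)
  · -- case 1/3 < a
    intro hlt
    constructor
    · -- lower bound, t = y/(3*(1+a))
      have ht : 0 < y/(3*(1+a)) := by positivity
      have h := hlb (y/(3*(1+a))) ht ?_
      · have heq : (1/(3*(1+a))) * y + s = s + y/(3*(1+a)) := by ring
        rw [heq]; exact h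
      · rw [show (1+a)*(y/(3*(1+a))) = y/3 by field_simp]
        exact ineq_low2 a y hlt ha1 hyp0 hy1
    · -- upper bound, t = y/(1+a)
      have ht : 0 < y/(1+a) := by positivity
      have h := hub (y/(1+a)) ht ?_
      · have heq : s + (1/(1+a)) * y = s + y/(1+a) := by ring
        rw [heq]; exact h
      · rw [show (1+a)*(y/(1+a)) = y by field_simp]
        exact ineq_up2 a y hlt ha1 hyp0
end
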